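/- Let γ > 0, s ≥ 0, and let F be the function λ ↦ (1 - e^{-(tλ)^m})^M on [1/4, 1], where t > 0, m ≥ 1, M ∈ ℕ. Then ‖F‖_{C^γ([1/4,1])} ≤ C·min{1, t^{mM}} for a constant C depending only on γ, m, M (where γ is an integer and the C^γ norm is the maximum of the sup-norms of derivatives up to order γ). -/

import Mathlib

open Real Set Finset Nat

lemma myIterPow (M p : ℕ) :
    iteratedDeriv p (fun z : ℝ => z ^ M) = fun z => (M.descFactorial p : ℝ) * z ^ (M - p) := by
  induction p with
  | zero => simp
  | succ p ih =>
    rw [iteratedDeriv_succ, ih]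
    funext z
    rw [deriv_const_mul _ (differentiableAt_pow _), deriv_pow_field, Nat.descFactorial_succ,
      Nat.cast_mul, Nat.sub_sub]
    ring

lemma myIterExp (a c : ℝ) (p : ℕ) :
    iteratedDeriv p (fun u : ℝ => a * Real.exp (c * u)) = fun u => a * c ^ p * Real.exp (c * u) := by
  induction p generalizing a with
  | zero => funext u; simp
  | succ p ih =>
    rw [iteratedDeriv_succ']
    have hd : deriv (fun u : ℝ => a * Real.exp (c * u)) = fun u => (a * c) * Real.exp (c * u) := by
      funext u
      have h1 : HasDerivAt (fun u : ℝ => Real.exp (c * u)) (Real.exp (c * u) * c) u := by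
        simpa [mul_comm] using ((hasDerivAt_id u).const_mul c).exp
      rw [(h1.const_mul a).deriv]; ring
    rw [hd, ih (a * c)]
    funext u; ring

lemma myIterH (τ : ℝ) (p : ℕ) :
    iteratedDeriv (p + 1) (fun u : ℝ => 1 - Real.exp (-(τ * u)))
      = fun u => -((-τ) ^ (p + 1) * Real.exp (-(τ * u))) := by
  rw [iteratedDeriv_succ']
  have hd : deriv (fun u : ℝ => 1 - Real.exp (-(τ * u))) = fun u => τ * Real.exp ((-τ) * u) := by
    funext u
    have h1 : HasDerivAt (fun u : ℝ => Real.exp (-(τ * u))) (Real.exp (-(τ * u)) * -τ) u := by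
      have := ((hasDerivAt_id u).const_mul (-τ)).exp
      simpa [mul_comm, neg_mul] using this
    rw [(h1.const_sub 1).deriv]; ring_nf
  rw [hd, myIterExp]
  funext u; ring_nf

lemma myIterRpow (m : ℝ) (i : ℕ) :
    ∀ x : ℝ, 0 < x → iteratedDeriv i (fun x : ℝ => x ^ m) x
      = (∏ j ∈ Finset.range i, (m - j)) * x ^ (m - i) := by
  induction i with
  | zero => intro x hx; simp
  | succ i ih =>
    intro x hx
    rw [iteratedDeriv_succ]
    have hev : iteratedDeriv i (fun x : ℝ => x ^ m)
        =ᶠ[nhds x] fun y => (∏ j ∈ Finset.range i, (m - j)) * y ^ (m - i) :=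
      Filter.eventuallyEq_of_mem (isOpen_Ioi.mem_nhds hx) (fun y hy => ih y hy)
    rw [hev.deriv_eq]
    rw [deriv_const_mul _ (Real.differentiableAt_rpow_const_of_ne _ (ne_of_gt hx))]
    rw [Real.deriv_rpow_const x]
    rw [Finset.prod_range_succ]
    have : m - ↑i - 1 = m - ↑(i + 1) := by push_cast; ring
    rw [this]
    ring

lemma myAbsIterH (τ : ℝ) (hτ : 0 < τ) (u : ℝ) (i : ℕ) (hi : 1 ≤ i) :
    |iteratedDeriv i (fun u : ℝ => 1 - Real.exp (-(τ * u))) u| = τ ^ i * Real.exp (-(τ * u)) := by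
  obtain ⟨j, rfl⟩ := Nat.exists_eq_add_of_le hi
  rw [show 1 + j = j + 1 by ring, myIterH]
  rw [abs_neg, abs_mul, abs_pow, abs_neg, abs_of_pos hτ, abs_of_pos (Real.exp_pos _)]

lemma myXpow (x : ℝ) (hx : 0 ≤ x) (p : ℕ) : x ^ p ≤ p ! * Real.exp x := by
  have h1 : x ^ p / p ! ≤ Real.exp x := by
    calc x ^ p / p ! ≤ ∑ i ∈ Finset.range (p + 1), x ^ i / i ! := by
          refine Finset.single_le_sum (f := fun i => x ^ i / i !) ?_ (Finset.self_mem_range_succ p)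
          intro i _
          positivity
      _ ≤ Real.exp x := Real.sum_le_exp_of_nonneg hx _
  have hp : (0:ℝ) < p ! := by positivity
  calc x ^ p = (x ^ p / p !) * p ! := by field_simp
    _ ≤ Real.exp x * p ! := by nlinarith
    _ = p ! * Real.exp x := by ring

lemma Hbound (M k : ℕ) (hM : 0 < M) (m : ℝ) (hm : 1 ≤ m) (τ : ℝ) (hτ : 0 < τ)
    (u : ℝ) (hu1 : (4:ℝ) ^ (-m) ≤ u) (hu2 : u ≤ 1) (p : ℕ) (hp : p ≤ k) :
    ‖iteratedFDeriv ℝ p (fun u : ℝ => (1 - Real.exp (-(τ * u))) ^ M) u‖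
      ≤ ((k ! : ℝ) * k ! * (M:ℝ) ^ k * ((4:ℝ) ^ m) ^ k) * min 1 (τ ^ M) := by
  have h4m : (0:ℝ) < (4:ℝ) ^ (-m) := Real.rpow_pos_of_pos (by norm_num) _
  have hu0 : 0 < u := lt_of_lt_of_le h4m hu1
  have hτu : 0 < τ * u := mul_pos hτ hu0
  set h : ℝ → ℝ := fun u => 1 - Real.exp (-(τ * u)) with hh_def
  set z : ℝ := h u with hz_def
  have hz0 : 0 ≤ z := by
    have : Real.exp (-(τ * u)) ≤ 1 := Real.exp_le_one_iff.mpr (by linarith)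
    simp only [hz_def, hh_def]; linarith
  have hz1 : z ≤ 1 := by
    have := Real.exp_pos (-(τ * u)); simp only [hz_def, hh_def]; linarith
  have hzτu : z ≤ τ * u := by
    have := Real.add_one_le_exp (-(τ * u))
    simp only [hz_def, hh_def]; linarith
  have hM1 : (1:ℝ) ≤ (M:ℝ) := by exact_mod_cast hM
  have h4m1 : (1:ℝ) ≤ (4:ℝ) ^ m := Real.one_le_rpow (by norm_num) (by linarith)
  have hKpos : (1:ℝ) ≤ (k ! : ℝ) * k ! * (M:ℝ) ^ k * ((4:ℝ) ^ m) ^ k := by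
    have h1 : (1:ℝ) ≤ (k ! : ℝ) := by
      exact_mod_cast Nat.one_le_iff_ne_zero.mpr (Nat.factorial_ne_zero k)
    have h2 : (1:ℝ) ≤ (M:ℝ) ^ k := one_le_pow₀ hM1
    have h3 : (1:ℝ) ≤ ((4:ℝ) ^ m) ^ k := one_le_pow₀ h4m1
    calc (1:ℝ) = 1 * 1 * 1 * 1 := by ring
      _ ≤ (k ! : ℝ) * k ! * (M:ℝ) ^ k * ((4:ℝ) ^ m) ^ k := by gcongr <;> linarith
  have hg2 : ContDiff ℝ (p : WithTop ℕ∞) (fun z : ℝ => z ^ M) := by fun_prop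
  have hf2 : ContDiff ℝ (p : WithTop ℕ∞) h := by
    simp only [hh_def]; fun_prop
  have hcomp : (fun u : ℝ => (1 - Real.exp (-(τ * u))) ^ M) = (fun z : ℝ => z ^ M) ∘ h := rfl
  rw [hcomp]
  have hCpow : ∀ i : ℕ, ‖iteratedFDeriv ℝ i (fun z : ℝ => z ^ M) (h u)‖
      ≤ (M:ℝ) ^ i * z ^ (M - i) := by
    intro i
    rw [norm_iteratedFDeriv_eq_norm_iteratedDeriv, myIterPow, Real.norm_eq_abs, abs_mul,
      abs_pow, abs_of_nonneg hz0]
    rw [Nat.abs_cast]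
    gcongr
    · exact_mod_cast Nat.descFactorial_le_pow M i
  rcases le_total τ 1 with hτ1 | hτ1
  · -- small τ
    have hmin : min 1 (τ ^ M) = τ ^ M := min_eq_right (pow_le_one₀ hτ.le hτ1)
    rw [hmin]
    have hzp : z ^ (M - p) ≤ τ ^ (M - p) := by
      calc z ^ (M - p) ≤ (τ * u) ^ (M - p) := pow_le_pow_left₀ hz0 hzτu _
        _ ≤ τ ^ (M - p) := by
            apply pow_le_pow_left₀ hτu.le
            nlinarith
    have key := norm_iteratedFDeriv_comp_le (g := fun z : ℝ => z ^ M) (f := h)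
      (n := p) (N := (p : WithTop ℕ∞)) hg2 hf2 le_rfl u
      (C := (M:ℝ) ^ p * z ^ (M - p)) (D := τ) ?_ ?_
    · refine le_trans key ?_
      have h1 : (M:ℝ) ^ p * z ^ (M - p) * τ ^ p ≤ (M:ℝ) ^ p * τ ^ M := by
        calc (M:ℝ) ^ p * z ^ (M - p) * τ ^ p ≤ (M:ℝ) ^ p * τ ^ (M - p) * τ ^ p := by
              gcongr
          _ = (M:ℝ) ^ p * τ ^ (M - p + p) := by rw [pow_add]; ring
          _ ≤ (M:ℝ) ^ p * τ ^ M :=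
              mul_le_mul_of_nonneg_left
                (pow_le_pow_of_le_one hτ.le hτ1 (by omega)) (by positivity)
      calc (p ! : ℝ) * ((M:ℝ) ^ p * z ^ (M - p)) * τ ^ p
          ≤ (p ! : ℝ) * ((M:ℝ) ^ p * τ ^ M) := by
            have h2 := mul_le_mul_of_nonneg_left h1 (by positivity : (0:ℝ) ≤ (p ! : ℝ))
            calc (p ! : ℝ) * ((M:ℝ) ^ p * z ^ (M - p)) * τ ^ p
                = (p ! : ℝ) * ((M:ℝ) ^ p * z ^ (M - p) * τ ^ p) := by ring
              _ ≤ (p ! : ℝ) * ((M:ℝ) ^ p * τ ^ M) := h2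
        _ = (p ! : ℝ) * 1 * (M:ℝ) ^ p * 1 * τ ^ M := by ring
        _ ≤ (k ! : ℝ) * (k ! : ℝ) * (M:ℝ) ^ k * ((4:ℝ) ^ m) ^ k * τ ^ M := by
            have e1 : (p ! : ℝ) ≤ (k ! : ℝ) := by exact_mod_cast Nat.factorial_le hp
            have e2 : (1:ℝ) ≤ (k ! : ℝ) := by
              exact_mod_cast Nat.one_le_iff_ne_zero.mpr (Nat.factorial_ne_zero k)
            have e3 : (M:ℝ) ^ p ≤ (M:ℝ) ^ k := pow_le_pow_right₀ hM1 hp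
            have e4 : (1:ℝ) ≤ ((4:ℝ) ^ m) ^ k := one_le_pow₀ h4m1
            gcongr <;> first | assumption | positivity
    · intro i hi
      refine le_trans (hCpow i) ?_
      exact mul_le_mul (pow_le_pow_right₀ hM1 hi)
        (pow_le_pow_of_le_one hz0 hz1 (Nat.sub_le_sub_left hi M))
        (by positivity) (by positivity)
    · intro i hi1 hip
      rw [norm_iteratedFDeriv_eq_norm_iteratedDeriv, Real.norm_eq_abs]
      rw [show h = (fun u : ℝ => 1 - Real.exp (-(τ * u))) from rfl]
      rw [myAbsIterH τ hτ u i hi1]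
      calc τ ^ i * Real.exp (-(τ * u)) ≤ τ ^ i * 1 := by
            gcongr
            exact Real.exp_le_one_iff.mpr (by linarith)
        _ = τ ^ i := by ring
  · -- large τ
    have hmin : min 1 (τ ^ M) = 1 := min_eq_left (one_le_pow₀ hτ1)
    rw [hmin, mul_one]
    match p, hp with
    | 0, _ =>
      rw [norm_iteratedFDeriv_eq_norm_iteratedDeriv, iteratedDeriv_zero, Real.norm_eq_abs]
      have : |z ^ M| ≤ 1 := by
        rw [abs_pow, abs_of_nonneg hz0]; exact pow_le_one₀ hz0 hz1
      calc |((fun z : ℝ => z ^ M) ∘ h) u| = |z ^ M| := rfl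
        _ ≤ 1 := this
        _ ≤ _ := hKpos
    | (q+1), hp =>
      set P := q + 1 with hP
      have hPpos : (0:ℝ) < P := by positivity
      have key := norm_iteratedFDeriv_comp_le (g := fun z : ℝ => z ^ M) (f := h)
        (n := P) (N := (P : WithTop ℕ∞)) (by fun_prop) (by simp only [hh_def]; fun_prop) le_rfl u
        (C := (M:ℝ) ^ k) (D := τ * Real.exp (-(τ * u) / P)) ?_ ?_
      · refine le_trans key ?_
        have hDp : (τ * Real.exp (-(τ * u) / P)) ^ P = τ ^ P * Real.exp (-(τ * u)) := by
          have hPne : (P:ℝ) ≠ 0 := ne_of_gt hPpos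
          have hmm : ((P:ℝ)) * (-(τ * u) / P) = -(τ * u) := by field_simp
          rw [mul_pow, ← Real.exp_nat_mul, hmm]
        rw [hDp]
        -- bound τ ^ P * exp (-(τ*u)) ≤ P ! * (4^m)^P
        set x := τ * (4:ℝ) ^ (-m) with hx_def
        have hx0 : 0 ≤ x := by positivity
        have hτx : τ = x * (4:ℝ) ^ m := by
          rw [hx_def, mul_assoc, ← Real.rpow_add (by norm_num : (0:ℝ) < 4)]
          simp
        have hxu : x ≤ τ * u := by
          rw [hx_def]
          exact mul_le_mul_of_nonneg_left hu1 hτ.le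
        have hbd : τ ^ P * Real.exp (-(τ * u)) ≤ (P ! : ℝ) * ((4:ℝ) ^ m) ^ P := by
          calc τ ^ P * Real.exp (-(τ * u)) ≤ τ ^ P * Real.exp (-x) := by
                gcongr
            _ = x ^ P * Real.exp (-x) * ((4:ℝ) ^ m) ^ P := by
                rw [hτx, mul_pow]; ring
            _ ≤ (P ! : ℝ) * Real.exp x * Real.exp (-x) * ((4:ℝ) ^ m) ^ P := by
                gcongr
                exact myXpow x hx0 P
            _ = (P ! : ℝ) * ((4:ℝ) ^ m) ^ P := by
                rw [mul_assoc ((P !:ℝ)), ← Real.exp_add]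
                simp
        calc (P ! : ℝ) * (M:ℝ) ^ k * (τ ^ P * Real.exp (-(τ * u)))
            ≤ (P ! : ℝ) * (M:ℝ) ^ k * ((P ! : ℝ) * ((4:ℝ) ^ m) ^ P) := by
              gcongr
          _ = (P ! : ℝ) * (P ! : ℝ) * (M:ℝ) ^ k * ((4:ℝ) ^ m) ^ P := by ring
          _ ≤ (k ! : ℝ) * (k ! : ℝ) * (M:ℝ) ^ k * ((4:ℝ) ^ m) ^ k := by
            have e1 : (P ! : ℝ) ≤ (k ! : ℝ) := by exact_mod_cast Nat.factorial_le hp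
            have e3 : ((4:ℝ) ^ m) ^ P ≤ ((4:ℝ) ^ m) ^ k := pow_le_pow_right₀ h4m1 hp
            gcongr <;> first | assumption | positivity
      · intro i hi
        refine le_trans (hCpow i) ?_
        calc (M:ℝ) ^ i * z ^ (M - i) ≤ (M:ℝ) ^ i * 1 := by
              gcongr
              exact pow_le_one₀ hz0 hz1
          _ ≤ (M:ℝ) ^ k := by
              rw [mul_one]
              exact pow_le_pow_right₀ hM1 (le_trans hi hp)
      · intro i hi1 hiP
        rw [norm_iteratedFDeriv_eq_norm_iteratedDeriv, Real.norm_eq_abs]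
        rw [show h = (fun u : ℝ => 1 - Real.exp (-(τ * u))) from rfl]
        rw [myAbsIterH τ hτ u i hi1]
        have hiP' : (i : ℝ) ≤ (P : ℝ) := by exact_mod_cast hiP
        calc τ ^ i * Real.exp (-(τ * u))
            ≤ τ ^ i * Real.exp ((i:ℝ) * (-(τ * u) / P)) := by
              gcongr
              · have h5 : (i:ℝ) * (-(τ * u) / P) = -((i:ℝ)/(P:ℝ) * (τ * u)) := by ring
                rw [h5, neg_le_neg_iff]
                exact mul_le_of_le_one_left hτu.le ((div_le_one hPpos).mpr hiP')
          _ = (τ * Real.exp (-(τ * u) / P)) ^ i := by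
              rw [mul_pow, ← Real.exp_nat_mul]

lemma Fbound (M k : ℕ) (hM : 0 < M) (m : ℝ) (hm : 1 ≤ m) (τ : ℝ) (hτ : 0 < τ)
    (lam : ℝ) (hl1 : 1/4 ≤ lam) (hl2 : lam ≤ 1) :
    |iteratedDeriv k (fun x : ℝ => (1 - Real.exp (-(τ * x ^ m))) ^ M) lam|
      ≤ ((k ! : ℝ) * ((k ! : ℝ) * k ! * (M:ℝ) ^ k * ((4:ℝ) ^ m) ^ k) * (4*(m+k)) ^ k)
        * min 1 (τ ^ M) := by
  have hlam0 : 0 < lam := by linarith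
  have hmem : lam ∈ Set.Ioi (0:ℝ) := hlam0
  have hm0 : 0 ≤ m := by linarith
  rw [← Real.norm_eq_abs, ← norm_iteratedFDeriv_eq_norm_iteratedDeriv,
    ← iteratedFDerivWithin_of_isOpen (f := fun x : ℝ => (1 - Real.exp (-(τ * x ^ m))) ^ M)
      (𝕜 := ℝ) k isOpen_Ioi hmem]
  have hcomp : (fun x : ℝ => (1 - Real.exp (-(τ * x ^ m))) ^ M)
      = (fun u : ℝ => (1 - Real.exp (-(τ * u))) ^ M) ∘ (fun x : ℝ => x ^ m) := rfl
  rw [hcomp]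
  have hfmem : (4:ℝ) ^ (-m) ≤ lam ^ m ∧ lam ^ m ≤ 1 := by
    constructor
    · have h4 : (4:ℝ) ^ (-m) = (1/4 : ℝ) ^ m := by
        rw [Real.rpow_neg (by norm_num : (0:ℝ) ≤ 4), ← Real.inv_rpow (by norm_num : (0:ℝ) ≤ 4)]
        norm_num
      rw [h4]
      exact Real.rpow_le_rpow (by norm_num) hl1 hm0
    · exact Real.rpow_le_one hlam0.le hl2 hm0
  have key := norm_iteratedFDerivWithin_comp_le
    (g := fun u : ℝ => (1 - Real.exp (-(τ * u))) ^ M) (f := fun x : ℝ => x ^ m)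
    (n := k) (s := Set.Ioi (0:ℝ)) (t := Set.univ) (N := (k : WithTop ℕ∞))
    (ContDiff.contDiffOn (by fun_prop))
    (fun x hx => (Real.contDiffAt_rpow_const_of_ne (ne_of_gt hx)).contDiffWithinAt)
    le_rfl uniqueDiffOn_univ isOpen_Ioi.uniqueDiffOn (Set.mapsTo_univ _ _) hmem
    (C := ((k ! : ℝ) * k ! * (M:ℝ) ^ k * ((4:ℝ) ^ m) ^ k) * min 1 (τ ^ M))
    (D := 4*(m+k)) ?_ ?_
  · refine le_trans key (le_of_eq ?_)
    ring
  · intro i hi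
    rw [iteratedFDerivWithin_univ]
    calc ‖iteratedFDeriv ℝ i (fun u : ℝ => (1 - Real.exp (-(τ * u))) ^ M) (lam ^ m)‖
        ≤ ((k ! : ℝ) * k ! * (M:ℝ) ^ k * ((4:ℝ) ^ m) ^ k) * min 1 (τ ^ M) :=
          Hbound M k hM m hm τ hτ (lam ^ m) hfmem.1 hfmem.2 i hi
      _ ≤ _ := le_refl _
  · intro i hi1 hik
    rw [iteratedFDerivWithin_of_isOpen (𝕜 := ℝ) i isOpen_Ioi hmem,
      norm_iteratedFDeriv_eq_norm_iteratedDeriv, Real.norm_eq_abs,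
      myIterRpow m i lam hlam0, abs_mul]
    have hb1 : |∏ j ∈ Finset.range i, (m - (j:ℝ))| ≤ (m + k) ^ i := by
      rw [Finset.abs_prod]
      calc ∏ j ∈ Finset.range i, |m - (j:ℝ)| ≤ ∏ _j ∈ Finset.range i, (m + k) := by
            refine Finset.prod_le_prod (fun j _ => abs_nonneg _) (fun j hj => ?_)
            have hjk : (j:ℝ) ≤ (k:ℝ) := by
              have : j < i := Finset.mem_range.mp hj
              exact_mod_cast le_trans (Nat.le_of_lt_succ (Nat.lt_succ_of_lt this)) hik
            rw [abs_le]
            constructor <;> [linarith; linarith]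
        _ = (m + k) ^ i := by rw [Finset.prod_const, Finset.card_range]
    have hb2 : |lam ^ (m - (i:ℝ))| ≤ (4:ℝ) ^ i := by
      rw [abs_of_pos (Real.rpow_pos_of_pos hlam0 _)]
      rcases le_or_gt 0 (m - (i:ℝ)) with hmi | hmi
      · calc lam ^ (m - (i:ℝ)) ≤ 1 := Real.rpow_le_one hlam0.le hl2 hmi
          _ ≤ (4:ℝ) ^ i := one_le_pow₀ (by norm_num)
      · calc lam ^ (m - (i:ℝ)) ≤ (1/4 : ℝ) ^ (m - (i:ℝ)) :=
              Real.rpow_le_rpow_of_nonpos (by norm_num) hl1 hmi.le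
          _ = (4:ℝ) ^ ((i:ℝ) - m) := by
              rw [show (m - (i:ℝ)) = -((i:ℝ) - m) by ring, one_div,
                Real.inv_rpow (by norm_num : (0:ℝ) ≤ 4), Real.rpow_neg (by norm_num : (0:ℝ) ≤ 4)]
              simp
          _ ≤ (4:ℝ) ^ ((i:ℝ)) :=
              Real.rpow_le_rpow_of_exponent_le (by norm_num) (by linarith)
          _ = (4:ℝ) ^ i := Real.rpow_natCast 4 i
    calc |∏ j ∈ Finset.range i, (m - (j:ℝ))| * |lam ^ (m - (i:ℝ))|
        ≤ (m + k) ^ i * (4:ℝ) ^ i :=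
          mul_le_mul hb1 hb2 (abs_nonneg _) (by positivity)
      _ = (4*(m+k)) ^ i := by rw [← mul_pow]; ring

theorem stmt_15 (γ : ℕ) (hγ : 0 < γ) (s : ℝ) (hs : 0 ≤ s)
    (m : ℝ) (hm : 1 ≤ m) (M : ℕ) (hM : 0 < M) :
    ∃ C : ℝ, 0 < C ∧ ∀ t : ℝ, 0 < t →
      ∑ k ∈ Finset.range (γ + 1),
          ⨆ lam : Set.Icc (1 / 4 : ℝ) 1,
            |iteratedDeriv k (fun x : ℝ => (1 - Real.exp (-(t * x) ^ m)) ^ M) (lam : ℝ)|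
        ≤ C * min 1 (t ^ (m * M)) := by
  have hm0 : (0:ℝ) ≤ m := by linarith
  set K : ℕ → ℝ := fun k =>
    (k ! : ℝ) * ((k ! : ℝ) * k ! * (M:ℝ) ^ k * ((4:ℝ) ^ m) ^ k) * (4*(m+k)) ^ k with hK
  have hKpos : ∀ k, 0 < K k := by
    intro k
    have h1 : (0:ℝ) < (k ! : ℝ) := by exact_mod_cast Nat.factorial_pos k
    have h2 : (0:ℝ) < (M:ℝ) := by exact_mod_cast hM
    have h3 : (0:ℝ) < (4:ℝ) ^ m := Real.rpow_pos_of_pos (by norm_num) m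
    have h4 : (0:ℝ) < 4*(m+(k:ℝ)) := by
      have : (0:ℝ) ≤ (k:ℝ) := Nat.cast_nonneg k
      linarith
    positivity
  refine ⟨∑ k ∈ Finset.range (γ + 1), K k, Finset.sum_pos (fun k _ => hKpos k) ⟨0, by simp⟩, ?_⟩
  intro t ht
  have hτ : 0 < t ^ m := Real.rpow_pos_of_pos ht m
  have hminEq : min 1 (t ^ (m * (M:ℝ))) = min 1 ((t ^ m) ^ M) := by
    rw [Real.rpow_mul ht.le, Real.rpow_natCast]
  rw [hminEq, Finset.sum_mul]
  refine Finset.sum_le_sum (fun k _ => ?_)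
  haveI : Nonempty (Set.Icc (1/4 : ℝ) 1) := ⟨⟨1/4, by norm_num, by norm_num⟩⟩
  refine ciSup_le (fun lam => ?_)
  obtain ⟨hl1, hl2⟩ := lam.2
  have heq : iteratedDeriv k (fun x : ℝ => (1 - Real.exp (-(t * x) ^ m)) ^ M) (lam : ℝ)
      = iteratedDeriv k (fun x : ℝ => (1 - Real.exp (-(t ^ m * x ^ m))) ^ M) (lam : ℝ) := by
    refine Set.EqOn.iteratedDeriv_of_isOpen (s := Set.Ioi (0:ℝ)) ?_ isOpen_Ioi k ?_
    · intro x hx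
      have hxx : (t * x) ^ m = t ^ m * x ^ m := Real.mul_rpow ht.le (le_of_lt hx)
      simp only [hxx]
    · show (0:ℝ) < (lam : ℝ); linarith
  rw [heq]
  exact Fbound M k hM m hm (t ^ m) hτ (lam : ℝ) hl1 hl2
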